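/- Sequential rule comparison: if β is primal optimal and θ = (y − Xβ)/λ_{t−1} is the dual optimal solution at λ_{t−1} (so G_{λ_{t−1}}(β,θ)=0), then (2/λ_t²)·G_{λ_t}(β,θ) = ((λ_{t−1}²/λ_t²)(1 − λ_t/λ_{t−1}) − (λ_{t−1}/λ_t − 1))·‖θ‖² ≤ (1/λ_t − 1/λ_{t−1})²·‖y‖². -/

import Mathlib

open scoped BigOperators

def toE {n : ℕ} (v : Fin n → ℝ) : EuclideanSpace ℝ (Fin n) := WithLp.toLp 2 v

/-- sequential rule comparison. If `θ = (y − Xβ)/λ_{t-1}` is the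
dual optimal at `λ_{t-1}` (so `G_{λ_{t-1}}(β,θ) = 0` and `‖θ‖ ≤ ‖y‖/λ_{t-1}`), then
`(2/λ_t²)G_{λ_t}(β,θ) = ((λ_{t-1}²/λ_t²)(1 − λ_t/λ_{t-1}) − (λ_{t-1}/λ_t − 1))‖θ‖²
 ≤ (1/λ_t − 1/λ_{t-1})²‖y‖²`. -/
theorem lasso_sequential_rule_comparison {n p : ℕ}
    (X : Matrix (Fin n) (Fin p) ℝ) (y : EuclideanSpace ℝ (Fin n))
    (lamt1 lamt : ℝ) (hlamt : 0 < lamt) (hle : lamt ≤ lamt1)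
    (β : Fin p → ℝ) (θ : EuclideanSpace ℝ (Fin n))
    (hθ : θ = (1/lamt1) • (y - toE (X.mulVec β)))
    (G : ℝ → ℝ)
    (hG : ∀ lam, G lam = ((1/2) * ‖toE (X.mulVec β) - y‖^2 + lam * ∑ j, |β j|)
            - ((1/2) * ‖y‖^2 - (lam^2/2) * ‖θ - (1/lam) • y‖^2))
    (hG0 : G lamt1 = 0)
    (hnorm : ‖θ‖ ≤ ‖y‖ / lamt1) :
    (2/lamt^2) * G lamt
      = ((lamt1^2/lamt^2) * (1 - lamt/lamt1) - (lamt1/lamt - 1)) * ‖θ‖^2 ∧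
    (2/lamt^2) * G lamt ≤ (1/lamt - 1/lamt1)^2 * ‖y‖^2 := by
  have hlamt1 : 0 < lamt1 := lt_of_lt_of_le hlamt hle
  have hXy : toE (X.mulVec β) - y = -(lamt1 • θ) := by
    rw [hθ, smul_smul]
    rw [mul_one_div, div_self hlamt1.ne', one_smul]
    abel
  have hnX : ‖toE (X.mulVec β) - y‖^2 = lamt1^2 * ‖θ‖^2 := by
    rw [hXy, norm_neg, norm_smul, mul_pow]
    simp [abs_of_pos hlamt1]
  have hexp : ∀ lam : ℝ, lam ≠ 0 →
      ‖θ - (1/lam) • y‖^2 = ‖θ‖^2 - (2/lam) * inner ℝ θ y + (1/lam^2) * ‖y‖^2 := by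
    intro lam hlam
    rw [norm_sub_sq_real, real_inner_smul_right, norm_smul, mul_pow]
    rw [Real.norm_eq_abs, sq_abs]
    ring
  have h1 := hG lamt1
  rw [hG0, hexp lamt1 hlamt1.ne', hnX] at h1
  have h2 := hG lamt
  rw [hexp lamt hlamt.ne', hnX] at h2
  have e1 : lamt1^2/2 * (‖θ‖^2 - (2/lamt1) * inner ℝ θ y + (1/lamt1^2) * ‖y‖^2)
      = lamt1^2/2 * ‖θ‖^2 - lamt1 * inner ℝ θ y + ‖y‖^2/2 := by
    field_simp
  have e2 : lamt^2/2 * (‖θ‖^2 - (2/lamt) * inner ℝ θ y + (1/lamt^2) * ‖y‖^2)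
      = lamt^2/2 * ‖θ‖^2 - lamt * inner ℝ θ y + ‖y‖^2/2 := by
    field_simp
  rw [e1] at h1
  rw [e2] at h2
  have hSum : (∑ j, |β j|) = inner ℝ θ y - lamt1 * ‖θ‖^2 := by
    apply mul_left_cancel₀ hlamt1.ne'
    nlinarith [h1]
  have hGval : G lamt = (1/2) * (lamt1 - lamt)^2 * ‖θ‖^2 := by
    rw [h2, hSum]
    ring
  constructor
  · rw [hGval]
    field_simp
  · rw [hGval]
    have hθ2 : ‖θ‖^2 ≤ (‖y‖ / lamt1)^2 := by
      apply sq_le_sq' _ hnorm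
      have h0 : (0:ℝ) ≤ ‖y‖ / lamt1 := div_nonneg (norm_nonneg _) hlamt1.le
      linarith [norm_nonneg θ]
    have h3 : (2/lamt^2) * ((1/2) * (lamt1 - lamt)^2 * ‖θ‖^2)
        ≤ (2/lamt^2) * ((1/2) * (lamt1 - lamt)^2 * (‖y‖/lamt1)^2) := by
      apply mul_le_mul_of_nonneg_left _ (by positivity)
      exact mul_le_mul_of_nonneg_left hθ2 (by positivity)
    refine h3.trans_eq ?_
    rw [div_pow]
    field_simp
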